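/- Let d be a positive natural number and let F : EuclideanSpace ℝ (Fin d) → ℝ be three times continuously differentiable, with the norm of the third iterated Fréchet derivative bounded by M ≥ 0 at every point. Let x̃⁺, x̃⁻ ∈ EuclideanSpace ℝ (Fin d), set x = (x̃⁺ + x̃⁻)/2 (the decoys are symmetric around the original input), and let K ⊆ Fin d be such that x̃⁺ₖ = x̃⁻ₖ for every k ∉ K. Then for every coordinate i, | |∂F/∂xᵢ(x̃⁺) − ∂F/∂xᵢ(x)| − (1/2)·|∑_{k ∈ K} (x̃⁺ₖ − x̃⁻ₖ) · (∂²F/∂xₖ∂xᵢ)(x)| | ≤ (M/8) · ‖x̃⁺ − x̃⁻‖². -/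

import Mathlib

open Set

/-- Second-order Taylor bound for a C² real-valued function on a normed space. -/
lemma taylor1_bound_aux {E : Type*} [NormedAddCommGroup E] [NormedSpace ℝ E]
    (G : E → ℝ) (hG : ContDiff ℝ 2 G) (x v : E) (C : ℝ)
    (hC : ∀ z : E, |fderiv ℝ (fderiv ℝ G) z v v| ≤ C) :
    |G (x + v) - G x - fderiv ℝ G x v| ≤ C / 2 := by
  set γ : ℝ → E := fun t => x + t • v with hγdef
  set g : ℝ → ℝ := fun t => G (γ t) with hgdef
  have hγ : ∀ t : ℝ, HasDerivAt γ v t := by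
    intro t
    have h1 : HasDerivAt (fun t : ℝ => t • v) ((1:ℝ) • v) t :=
      (hasDerivAt_id t).smul_const v
    have h2 := h1.const_add x
    rw [one_smul] at h2
    exact h2
  have hγC : ContDiff ℝ 2 γ := contDiff_const.add (contDiff_id.smul contDiff_const)
  have hgC : ContDiff ℝ 2 g := hG.comp hγC
  have hg1 : ∀ t : ℝ, HasDerivAt g (fderiv ℝ G (γ t) v) t := fun t =>
    ((hG.differentiable (by norm_num) (γ t)).hasFDerivAt).comp_hasDerivAt t (hγ t)
  have hderiv : deriv g = fun t => fderiv ℝ G (γ t) v := funext fun t => (hg1 t).deriv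
  set H : E → ℝ := fun z => fderiv ℝ G z v with hHdef
  have hfdG : ContDiff ℝ 1 (fderiv ℝ G) := hG.fderiv_right (by norm_num)
  have hH : ContDiff ℝ 1 H :=
    (ContinuousLinearMap.apply ℝ ℝ v).contDiff.comp hfdG
  have hHf : ∀ z : E, fderiv ℝ H z = (fderiv ℝ (fderiv ℝ G) z).flip v := by
    intro z
    have := fderiv_clm_apply (c := fderiv ℝ G) (u := fun _ => v)
      (hfdG.differentiable one_ne_zero z) (differentiableAt_const v)
    simpa [hHdef] using this
  have hg2 : ∀ t : ℝ, HasDerivAt (deriv g) (fderiv ℝ (fderiv ℝ G) (γ t) v v) t := by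
    intro t
    have h := ((hH.differentiable one_ne_zero (γ t)).hasFDerivAt).comp_hasDerivAt t (hγ t)
    rw [hderiv]
    have heq : H ∘ γ = fun t => fderiv ℝ G (γ t) v := rfl
    rw [heq] at h
    have := hHf (γ t)
    simpa [this] using h
  have hderiv2 : deriv (deriv g) = fun t => fderiv ℝ (fderiv ℝ G) (γ t) v v :=
    funext fun t => (hg2 t).deriv
  have h01 : (0:ℝ) < 1 := one_pos
  have hunique : UniqueDiffOn ℝ (Icc (0:ℝ) 1) := uniqueDiffOn_Icc h01
  have heq1 : ∀ t ∈ Icc (0:ℝ) 1, iteratedDerivWithin 1 g (Icc (0:ℝ) 1) t = deriv g t := by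
    intro t ht
    rw [iteratedDerivWithin_one]
    exact ((hgC.differentiable (by norm_num)) t).derivWithin (hunique t ht)
  have hdiffderiv : Differentiable ℝ (deriv g) := fun t => (hg2 t).differentiableAt
  have hIcc : uIcc (0:ℝ) 1 = Icc 0 1 := Set.uIcc_of_le zero_le_one
  have hIoo : uIoo (0:ℝ) 1 = Ioo 0 1 := Set.uIoo_of_le zero_le_one
  obtain ⟨x', hx', hT⟩ := taylor_mean_remainder_lagrange (f := g) (x₀ := 0) (x := 1) (n := 1) h01.ne
    ((hgC.of_le (by norm_num)).contDiffOn)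
    (by rw [hIcc, hIoo]; exact ((hdiffderiv.differentiableOn).congr fun t ht => heq1 t (Ioo_subset_Icc_self ht)))
  rw [hIcc] at hT
  rw [hIoo] at hx'
  have hTeval : taylorWithinEval g 1 (Icc (0:ℝ) 1) 0 1 = g 0 + deriv g 0 := by
    rw [taylorWithinEval_succ, taylor_within_zero_eval, heq1 0 (by norm_num)]
    norm_num
  have h2 : iteratedDerivWithin 2 g (Icc (0:ℝ) 1) x' = deriv (deriv g) x' := by
    have hx'Icc : x' ∈ Icc (0:ℝ) 1 := Ioo_subset_Icc_self hx'
    rw [iteratedDerivWithin_succ]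
    rw [derivWithin_congr heq1 (heq1 x' hx'Icc)]
    exact (hdiffderiv x').derivWithin (hunique x' hx'Icc)
  rw [hTeval, h2] at hT
  have hgx : g 1 = G (x + v) := by simp [hgdef, hγdef]
  have hg0 : g 0 = G x := by simp [hgdef, hγdef]
  have hd0 : deriv g 0 = fderiv ℝ G x v := by
    rw [hderiv]; simp [hγdef]
  rw [hgx, hg0, hd0] at hT
  have hfin : G (x + v) - G x - fderiv ℝ G x v = deriv (deriv g) x' / 2 := by
    rw [sub_sub, hT]; norm_num
  rw [hfin, hderiv2, abs_div, abs_of_nonneg (by norm_num : (0:ℝ) ≤ 2)]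
  linarith [hC (γ x')]

lemma third_deriv_eq_aux {E : Type*} [NormedAddCommGroup E] [NormedSpace ℝ E]
    (F : E → ℝ) (hF : ContDiff ℝ 3 F) (e z w u : E) :
    fderiv ℝ (fderiv ℝ (fun y => fderiv ℝ F y e)) z w u
      = iteratedFDeriv ℝ 3 F z ![w, u, e] := by
  have hfd : ContDiff ℝ 2 (fderiv ℝ F) := hF.fderiv_right (by norm_num)
  set A := ContinuousLinearMap.apply ℝ ℝ e with hA
  have hGdef : (fun y => fderiv ℝ F y e) = A ∘ fderiv ℝ F := rfl
  have h1 : fderiv ℝ (fderiv ℝ (fun y => fderiv ℝ F y e)) z w u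
      = iteratedFDeriv ℝ 2 (fun y => fderiv ℝ F y e) z ![w, u] := by
    rw [iteratedFDeriv_two_apply]
    rfl
  have h2 : iteratedFDeriv ℝ 2 (A ∘ fderiv ℝ F) z
      = A.compContinuousMultilinearMap (iteratedFDeriv ℝ 2 (fderiv ℝ F) z) :=
    A.iteratedFDeriv_comp_left hfd.contDiffAt le_rfl
  have hinit : Fin.init ![w, u, e] = ![w, u] := by
    funext j; fin_cases j <;> rfl
  have h3 : iteratedFDeriv ℝ 3 F z ![w, u, e]
      = iteratedFDeriv ℝ 2 (fun y => fderiv ℝ F y) z ![w, u] e := by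
    rw [iteratedFDeriv_succ_apply_right (n := 2), hinit]
    rfl
  rw [h1, hGdef, h2, h3]
  rfl

/-- Symmetric-decoy form of Theorem 1 of the paper: if the original input `x`
is the midpoint of the two decoys `x̃⁺` and `x̃⁻` (which agree off the
swappable feature set `K`), then the deviation of the decoy's vanilla gradient
saliency score from the original one equals, up to `(M/8)‖x̃⁺ - x̃⁻‖²`, one
half of the magnitude of the Hessian-weighted sum
`∑_{k ∈ K} (x̃⁺ₖ - x̃⁻ₖ)(H_x)_{k,i}`, where `M` bounds the third iterated
Fréchet derivative of `F`. -/
theorem decoy_saliency_hessian_bound_symmetric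
    (d : ℕ) (hd : 0 < d)
    (F : EuclideanSpace ℝ (Fin d) → ℝ) (M : ℝ) (hM : 0 ≤ M)
    (hF : ContDiff ℝ 3 F)
    (hM3 : ∀ z : EuclideanSpace ℝ (Fin d), ‖iteratedFDeriv ℝ 3 F z‖ ≤ M)
    (xp xm x : EuclideanSpace ℝ (Fin d))
    (hx : x = (2 : ℝ)⁻¹ • (xp + xm))
    (K : Finset (Fin d))
    (hK : ∀ k : Fin d, k ∉ K → xp k = xm k)
    (i : Fin d) :
    abs (|fderiv ℝ F xp (EuclideanSpace.single i 1)
            - fderiv ℝ F x (EuclideanSpace.single i 1)|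
        - 1 / 2 * |∑ k ∈ K, (xp k - xm k) *
            fderiv ℝ (fun z => fderiv ℝ F z (EuclideanSpace.single i 1)) x
              (EuclideanSpace.single k 1)|)
      ≤ M / 8 * ‖xp - xm‖ ^ 2 := by
  set e : EuclideanSpace ℝ (Fin d) := EuclideanSpace.single i 1 with he
  set G : EuclideanSpace ℝ (Fin d) → ℝ := fun z => fderiv ℝ F z e with hG
  set v : EuclideanSpace ℝ (Fin d) := xp - x with hv
  have hGC2 : ContDiff ℝ 2 G :=
    (ContinuousLinearMap.apply ℝ ℝ e).contDiff.comp (hF.fderiv_right (by norm_num))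
  have hvhalf : v = (2:ℝ)⁻¹ • (xp - xm) := by
    rw [hv, hx]; module
  have hnormv : ‖v‖ = (2:ℝ)⁻¹ * ‖xp - xm‖ := by
    rw [hvhalf, norm_smul]; norm_num
  have hnorme : ‖e‖ = 1 := by
    rw [he, EuclideanSpace.norm_single, norm_one]
  -- bound on the second derivative of G
  have hbound : ∀ z : EuclideanSpace ℝ (Fin d),
      |fderiv ℝ (fderiv ℝ G) z v v| ≤ M * ‖v‖ ^ 2 := by
    intro z
    rw [hG, third_deriv_eq_aux F hF e z v v]
    calc |iteratedFDeriv ℝ 3 F z ![v, v, e]|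
        ≤ ‖iteratedFDeriv ℝ 3 F z‖ * ∏ j, ‖(![v, v, e]) j‖ :=
          (iteratedFDeriv ℝ 3 F z).le_opNorm _
      _ = ‖iteratedFDeriv ℝ 3 F z‖ * (‖v‖ * ‖v‖) := by
          rw [Fin.prod_univ_three]
          simp [hnorme]
      _ ≤ M * (‖v‖ * ‖v‖) := by
          apply mul_le_mul_of_nonneg_right (hM3 z) (by positivity)
      _ = M * ‖v‖ ^ 2 := by ring
  have htaylor := taylor1_bound_aux G hGC2 x v (M * ‖v‖ ^ 2) hbound
  have hxv : x + v = xp := by rw [hv]; abel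
  rw [hxv] at htaylor
  -- identify fderiv G x v with half the sum
  have hsum : (∑ k, ((xp - xm) k) • (EuclideanSpace.single k 1 : EuclideanSpace ℝ (Fin d)))
      = xp - xm := by
    simpa using (EuclideanSpace.basisFun (Fin d) ℝ).sum_repr (xp - xm)
  have hBfull : fderiv ℝ G x (xp - xm)
      = ∑ k, ((xp k - xm k)) * fderiv ℝ G x (EuclideanSpace.single k 1) := by
    conv_lhs => rw [← hsum]
    rw [map_sum]
    refine Finset.sum_congr rfl fun k _ => ?_
    rw [map_smul]
    simp [smul_eq_mul]
  have hKsum : (∑ k, ((xp k - xm k)) * fderiv ℝ G x (EuclideanSpace.single k 1))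
      = ∑ k ∈ K, ((xp k - xm k)) * fderiv ℝ G x (EuclideanSpace.single k 1) := by
    refine (Finset.sum_subset K.subset_univ fun k _ hk => ?_).symm
    rw [hK k hk]; ring
  have hB : fderiv ℝ G x v
      = (2:ℝ)⁻¹ * ∑ k ∈ K, ((xp k - xm k)) * fderiv ℝ G x (EuclideanSpace.single k 1) := by
    rw [hvhalf, map_smul, smul_eq_mul, hBfull, hKsum]
  set S := ∑ k ∈ K, ((xp k - xm k)) * fderiv ℝ G x (EuclideanSpace.single k 1) with hS
  have habsB : |fderiv ℝ G x v| = 1 / 2 * |S| := by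
    rw [hB, abs_mul]
    norm_num
  have hmain : |(|G xp - G x| - 1 / 2 * |S|)| ≤ M * ‖v‖ ^ 2 / 2 := by
    rw [← habsB]
    calc |(|G xp - G x| - |fderiv ℝ G x v|)|
        ≤ |(G xp - G x) - fderiv ℝ G x v| := abs_abs_sub_abs_le_abs_sub _ _
      _ ≤ M * ‖v‖ ^ 2 / 2 := htaylor
  have hrhs : M * ‖v‖ ^ 2 / 2 = M / 8 * ‖xp - xm‖ ^ 2 := by
    rw [hnormv]; ring
  rw [hrhs] at hmain
  exact hmain
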